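/- arXiv:0807.2701 — 7 statements merged into one kernel-verified Lean document; each statement's English description precedes it below -/
import Mathlib

section
/- If a point p ∈ ℝ^n and a binary vector t ∈ F_2^n satisfy: there exists j in Supp(t) with p_j > Σ_{l ∈ Supp(t)\{j}} p_l, then p is not in the single parity polytope U(t). -/
open Finset

/-- Support of a binary vector. -/
def SuppZ {n : ℕ} (t : Fin n → ZMod 2) : Finset (Fin n) :=
  Finset.univ.filter (fun i => t i ≠ 0)

open Classical in
/-- Support of a real vector. -/
noncomputable def SuppR {n : ℕ} (p : Fin n → ℝ) : Finset (Fin n) :=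
  Finset.univ.filter (fun i => p i ≠ 0)

/-- Single parity polytope U(t). -/
def parityPolytope {n : ℕ} (t : Fin n → ZMod 2) : Set (Fin n → ℝ) :=
  {f | (∀ i, f i ∈ Set.Icc (0:ℝ) 1) ∧
    ∀ S ⊆ SuppZ t, Odd S.card →
      ∑ j ∈ S, f j + ∑ j ∈ SuppZ t \ S, (1 - f j) ≤ ((SuppZ t).card : ℝ) - 1}

/-- Fundamental polytope P(H). -/
def fundamentalPolytope {m n : ℕ} (H : Fin m → Fin n → ZMod 2) : Set (Fin n → ℝ) :=
  ⋂ i, parityPolytope (H i)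

/-- The binary linear code C(H). -/
def code {m n : ℕ} (H : Fin m → Fin n → ZMod 2) : Set (Fin n → ZMod 2) :=
  {x | ∀ i, ∑ j, x j * H i j = 0}

/-- Embedding of a binary vector into ℝ^n as a 0-1 vector. -/
def embed {n : ℕ} (x : Fin n → ZMod 2) : Fin n → ℝ := fun i => ((x i).val : ℝ)

/-- A vertex of a set: a point of the set not expressible as a proper convex
combination of two distinct points of the set. -/
def IsVertex {n : ℕ} (X : Set (Fin n → ℝ)) (f : Fin n → ℝ) : Prop :=
  f ∈ X ∧ ∀ g h : Fin n → ℝ, g ∈ X → h ∈ X → ∀ t : ℝ, 0 < t → t < 1 →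
    (f = fun i => t * g i + (1 - t) * h i) → g = h

theorem stmt0 {n : ℕ} (t : Fin n → ZMod 2) (p : Fin n → ℝ)
    (h : ∃ j ∈ SuppZ t, p j > ∑ l ∈ SuppZ t \ {j}, p l) :
    p ∉ parityPolytope t := by
  rintro ⟨hbox, hineq⟩
  obtain ⟨j, hj, hgt⟩ := h
  have hsub : {j} ⊆ SuppZ t := Finset.singleton_subset_iff.mpr hj
  have hodd : Odd ({j} : Finset (Fin n)).card := by simp
  have := hineq {j} hsub hodd
  rw [Finset.sum_singleton] at this
  have hsum : ∑ l ∈ SuppZ t \ {j}, (1 - p l)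
      = (SuppZ t \ {j}).card - ∑ l ∈ SuppZ t \ {j}, p l := by
    rw [Finset.sum_sub_distrib, Finset.sum_const, nsmul_eq_mul, mul_one]
  have hcard : ((SuppZ t \ {j}).card : ℝ) = (SuppZ t).card - 1 := by
    rw [Finset.card_sdiff_of_subset hsub]
    have : 1 ≤ (SuppZ t).card := Finset.card_pos.mpr ⟨j, hj⟩
    rw [Finset.card_singleton, Nat.cast_sub this, Nat.cast_one]
  rw [hsum, hcard] at this
  linarith
end

section
/- For a binary m×n parity check matrix H, the integral points of the fundamental polytope are exactly the codewords: P(H) ∩ {0,1}^n = C(H) (viewing codewords as 0-1 vectors in ℝ^n). -/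
open Finset

open Finset Classical

lemma zmod2_ne_zero {a : ZMod 2} (h : a ≠ 0) : a = 1 := by
  revert h; revert a; decide

lemma sum_eq_card {n : ℕ} (f : Fin n → ℝ) (hf : ∀ i, f i = 0 ∨ f i = 1)
    (S : Finset (Fin n)) :
    ∑ j ∈ S, f j = ((S.filter (fun j => f j = 1)).card : ℝ) := by
  classical
  rw [← Finset.sum_boole]
  exact Finset.sum_congr rfl fun j _ => by rcases hf j with h | h <;> simp [h]

lemma sum_one_sub_eq_card {n : ℕ} (f : Fin n → ℝ) (hf : ∀ i, f i = 0 ∨ f i = 1)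
    (S : Finset (Fin n)) :
    ∑ j ∈ S, (1 - f j) = ((S.filter (fun j => ¬ f j = 1)).card : ℝ) := by
  classical
  rw [← Finset.sum_boole]
  exact Finset.sum_congr rfl fun j _ => by rcases hf j with h | h <;> simp [h]

lemma lemA {n : ℕ} (t : Fin n → ZMod 2) (f : Fin n → ℝ)
    (hf : ∀ i, f i = 0 ∨ f i = 1) :
    f ∈ parityPolytope t ↔ Even ((SuppZ t).filter (fun j => f j = 1)).card := by
  classical
  constructor
  · rintro ⟨_, hineq⟩
    by_contra hodd
    rw [Nat.not_even_iff_odd] at hodd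
    set F := (SuppZ t).filter (fun j => f j = 1) with hF
    have hsub : F ⊆ SuppZ t := Finset.filter_subset _ _
    have := hineq F hsub hodd
    rw [sum_eq_card f hf, sum_one_sub_eq_card f hf] at this
    have h1 : F.filter (fun j => f j = 1) = F := by
      apply Finset.filter_eq_self.2
      intro j hj; exact (Finset.mem_filter.1 hj).2
    have h2 : (SuppZ t \ F).filter (fun j => ¬ f j = 1) = SuppZ t \ F := by
      apply Finset.filter_eq_self.2
      intro j hj
      rcases Finset.mem_sdiff.1 hj with ⟨hj1, hj2⟩
      intro hfj; exact hj2 (Finset.mem_filter.2 ⟨hj1, hfj⟩)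
    rw [h1, h2] at this
    have hcard : F.card + (SuppZ t \ F).card = (SuppZ t).card := by
      have := Finset.card_le_card hsub
      rw [Finset.card_sdiff_of_subset hsub]; omega
    have := this
    push_cast at this
    have : ((SuppZ t).card : ℝ) ≤ ((SuppZ t).card : ℝ) - 1 := by
      calc ((SuppZ t).card : ℝ) = (F.card : ℝ) + ((SuppZ t \ F).card : ℝ) := by
            exact_mod_cast hcard.symm
        _ ≤ _ := this
    linarith
  · intro heven
    refine ⟨fun i => by rcases hf i with h | h <;> simp [h], ?_⟩
    intro S hS hSodd
    rw [sum_eq_card f hf, sum_one_sub_eq_card f hf]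
    set a := (S.filter (fun j => f j = 1)).card with ha
    set b := ((SuppZ t \ S).filter (fun j => f j = 1)).card with hb
    have hsplit : a + b = ((SuppZ t).filter (fun j => f j = 1)).card := by
      rw [ha, hb, ← Finset.card_union_of_disjoint, ← Finset.filter_union,
        Finset.union_sdiff_of_subset hS]
      exact Finset.disjoint_filter_filter (Finset.disjoint_sdiff)
    have hcompl : ((SuppZ t \ S).filter (fun j => ¬ f j = 1)).card
        = (SuppZ t \ S).card - b := by
      rw [hb, Finset.filter_not, Finset.card_sdiff_of_subset (Finset.filter_subset _ _)]
    have hsd : (SuppZ t \ S).card = (SuppZ t).card - S.card := Finset.card_sdiff_of_subset hS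
    have hSle : S.card ≤ (SuppZ t).card := Finset.card_le_card hS
    have haS : a ≤ S.card := Finset.card_filter_le _ _
    have hble : b ≤ (SuppZ t \ S).card := Finset.card_filter_le _ _
    -- key nat inequality: a + 1 ≤ S.card + b
    have key : a + 1 ≤ S.card + b := by
      rcases Nat.eq_zero_or_pos b with hb0 | hb0
      · have : Even a := by
          rw [← hsplit, hb0, Nat.add_zero] at heven; exact heven
        have : a ≠ S.card := by
          intro h; rw [h] at this
          exact (Nat.not_even_iff_odd.2 hSodd) this
        omega
      · omega
    rw [hcompl, Nat.cast_sub hble]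
    have hsdR : ((SuppZ t \ S).card : ℝ) = ((SuppZ t).card : ℝ) - (S.card : ℝ) := by
      rw [hsd, Nat.cast_sub hSle]
    have keyR : (a : ℝ) + 1 ≤ (S.card : ℝ) + (b : ℝ) := by exact_mod_cast key
    linarith

lemma lemB {n : ℕ} (t : Fin n → ZMod 2) (f : Fin n → ℝ)
    (x : Fin n → ZMod 2) (hx : ∀ j, x j = if f j = 1 then 1 else 0) :
    ∑ j, x j * t j = (((SuppZ t).filter (fun j => f j = 1)).card : ZMod 2) := by
  classical
  rw [← Finset.sum_boole]
  rw [← Finset.sum_subset (Finset.subset_univ (SuppZ t))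
    (fun j _ hj => by
      have : t j = 0 := by
        by_contra h; exact hj (Finset.mem_filter.2 ⟨Finset.mem_univ _, h⟩)
      simp [this])]
  apply Finset.sum_congr rfl
  intro j hj
  have ht1 : t j = 1 := zmod2_ne_zero (Finset.mem_filter.1 hj).2
  rw [ht1, mul_one, hx]

lemma zmod2_zero_or_one (a : ZMod 2) : a = 0 ∨ a = 1 := by revert a; decide

theorem stmt3 {m n : ℕ} (H : Fin m → Fin n → ZMod 2) :
    fundamentalPolytope H ∩ {f | ∀ i, f i = 0 ∨ f i = 1} = embed '' code H := by
  classical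
  ext f
  simp only [Set.mem_inter_iff, Set.mem_setOf_eq, Set.mem_image]
  constructor
  · rintro ⟨hfP, hf01⟩
    refine ⟨fun j => if f j = 1 then 1 else 0, ?_, ?_⟩
    · intro i
      rw [lemB (H i) f _ (fun j => rfl)]
      have hev : Even ((SuppZ (H i)).filter (fun j => f j = 1)).card :=
        (lemA (H i) f hf01).1 (Set.mem_iInter.1 hfP i)
      obtain ⟨k, hk⟩ := hev
      rw [hk, ← two_mul, Nat.cast_mul, ZMod.natCast_self, zero_mul]
    · funext j
      rcases hf01 j with h | h <;> simp [embed, h, ZMod.val_one]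
  · rintro ⟨x, hx, rfl⟩
    have hf01 : ∀ i, embed x i = 0 ∨ embed x i = 1 := by
      intro i
      rcases zmod2_zero_or_one (x i) with h | h <;> simp [embed, h, ZMod.val_one]
    have hxj : ∀ j, x j = if embed x j = 1 then 1 else 0 := by
      intro j
      rcases zmod2_zero_or_one (x j) with h | h <;> simp [embed, h, ZMod.val_one]
    refine ⟨Set.mem_iInter.2 fun i => (lemA (H i) (embed x) hf01).2 ?_, hf01⟩
    have hc := hx i
    rw [lemB (H i) (embed x) x hxj] at hc
    have hdvd : (2 : ℕ) ∣ _ := (ZMod.natCast_eq_zero_iff _ 2).1 hc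
    exact (even_iff_two_dvd).2 hdvd
end

section
/- Let H be a binary m×n parity check matrix, p ∈ P(H), and h a redundant row of H such that U(h) is a cutting polytope of p (i.e., for j = argmax_{i∈Supp(h)} p_i, one has p_j > Σ_{l∈Supp(h)\{j}} p_l). Then C(H) ⊆ P(H) ∩ U(h) and p ∉ P(H) ∩ U(h). -/
open Finset

lemma embed_mem_parityPolytope {n : ℕ} (t x : Fin n → ZMod 2)
    (hx : ∑ j, x j * t j = 0) : embed x ∈ parityPolytope t := by
  have hz : ∀ z : ZMod 2, z = 0 ∨ z = 1 := by decide
  constructor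
  · intro i
    rcases hz (x i) with h | h <;> simp [embed, h, ZMod.val_one]
  · intro S hS hodd
    set T := SuppZ t with hT
    have hemb : ∀ i, embed x i = if x i = 1 then (1:ℝ) else 0 := by
      intro i; rcases hz (x i) with h | h <;> simp [embed, h, ZMod.val_one]
    have h1 : ∑ i ∈ S, embed x i = ((S.filter (fun i => x i = 1)).card : ℝ) := by
      simp_rw [hemb]; rw [Finset.sum_boole]
    have hemb2 : ∀ i, (1:ℝ) - embed x i = if ¬ x i = 1 then (1:ℝ) else 0 := by
      intro i; rcases hz (x i) with h | h <;> simp [embed, h, ZMod.val_one]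
    have h2 : ∑ i ∈ T \ S, ((1:ℝ) - embed x i)
        = (((T \ S).filter (fun i => ¬ x i = 1)).card : ℝ) := by
      simp_rw [hemb2]; rw [Finset.sum_boole]
    set A := S.filter (fun i => x i = 1) with hA
    set B := (T \ S).filter (fun i => ¬ x i = 1) with hB
    -- X even
    have hXeven : Even (T.filter (fun i => x i = 1)).card := by
      have e1 : ∑ i ∈ T, x i * t i = ∑ i, x i * t i := by
        apply Finset.sum_subset (Finset.subset_univ T)
        intro i _ hiT
        have : t i = 0 := by
          by_contra hti
          exact hiT (Finset.mem_filter.2 ⟨Finset.mem_univ i, hti⟩)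
        simp [this]
      have e2 : ∑ i ∈ T, x i * t i = ∑ i ∈ T, x i := by
        apply Finset.sum_congr rfl
        intro i hi
        have : t i = 1 := by
          rcases hz (t i) with h | h
          · exact absurd h (Finset.mem_filter.1 hi).2
          · exact h
        simp [this]
      have e3 : ∑ i ∈ T, x i = ((T.filter (fun i => x i = 1)).card : ZMod 2) := by
        have : ∀ i ∈ T, x i = if x i = 1 then (1 : ZMod 2) else 0 := by
          intro i _; rcases hz (x i) with h | h <;> simp [h]
        rw [Finset.sum_congr rfl this, Finset.sum_boole]
      have : ((T.filter (fun i => x i = 1)).card : ZMod 2) = 0 := by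
        rw [← e3, ← e2, e1, hx]
      have hdvd : (2 : ℕ) ∣ (T.filter (fun i => x i = 1)).card :=
        (ZMod.natCast_eq_zero_iff _ 2).1 this
      exact even_iff_two_dvd.2 hdvd
    have hdisj : Disjoint A B := by
      apply Finset.disjoint_left.2
      intro i hiA hiB
      exact (Finset.mem_sdiff.1 (Finset.mem_filter.1 hiB).1).2 (Finset.mem_filter.1 hiA).1
    have hsub : A ∪ B ⊆ T := by
      apply Finset.union_subset
      · exact (Finset.filter_subset _ _).trans hS
      · exact (Finset.filter_subset _ _).trans (Finset.sdiff_subset)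
    have hne : A ∪ B ≠ T := by
      intro hEq
      have hSX : S = T.filter (fun i => x i = 1) := by
        ext i
        simp only [Finset.mem_filter]
        constructor
        · intro hiS
          have hiT : i ∈ T := hS hiS
          have : i ∈ A ∪ B := hEq ▸ hiT
          rcases Finset.mem_union.1 this with hA' | hB'
          · exact ⟨hiT, (Finset.mem_filter.1 hA').2⟩
          · exact absurd (Finset.mem_filter.1 hB').1 (by simp [hiS])
        · rintro ⟨hiT, hxi⟩
          by_contra hiS
          have : i ∈ A ∪ B := hEq ▸ hiT
          rcases Finset.mem_union.1 this with hA' | hB'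
          · exact hiS (Finset.mem_filter.1 hA').1
          · exact (Finset.mem_filter.1 hB').2 hxi
      rw [hSX] at hodd
      rcases hXeven with ⟨k, hk⟩
      rcases hodd with ⟨l, hl⟩
      omega
    have hlt : (A ∪ B).card < T.card :=
      Finset.card_lt_card (Finset.ssubset_iff_subset_ne.2 ⟨hsub, hne⟩)
    rw [Finset.card_union_of_disjoint hdisj] at hlt
    rw [h1, h2]
    have : (A.card : ℝ) + B.card + 1 ≤ T.card := by exact_mod_cast hlt
    linarith

theorem stmt5 {m n : ℕ} (H : Fin m → Fin n → ZMod 2) (a : Fin m → ZMod 2)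
    (h : Fin n → ZMod 2) (hh : h = fun j => ∑ i, a i * H i j)
    (p : Fin n → ℝ) (hp : p ∈ fundamentalPolytope H)
    (j : Fin n) (hj : j ∈ SuppZ h) (hmax : ∀ i ∈ SuppZ h, p i ≤ p j)
    (hcut : p j > ∑ l ∈ SuppZ h \ {j}, p l) :
    embed '' code H ⊆ fundamentalPolytope H ∩ parityPolytope h ∧
    p ∉ fundamentalPolytope H ∩ parityPolytope h := by
  constructor
  · rintro f ⟨x, hx, rfl⟩
    have hcode : ∀ i, ∑ l, x l * H i l = 0 := hx
    refine ⟨Set.mem_iInter.2 fun i => embed_mem_parityPolytope _ _ (hcode i),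
      embed_mem_parityPolytope _ _ ?_⟩
    subst hh
    have hswap : ∑ l, x l * (∑ i, a i * H i l) = ∑ i, a i * (∑ l, x l * H i l) := by
      simp_rw [Finset.mul_sum]
      rw [Finset.sum_comm]
      apply Finset.sum_congr rfl; intro i _
      apply Finset.sum_congr rfl; intro l _
      ring
    simp only [hswap]
    simp [hcode]
  · rintro ⟨-, hU⟩
    have hjsub : ({j} : Finset (Fin n)) ⊆ SuppZ h := Finset.singleton_subset_iff.2 hj
    have hineq := hU.2 {j} hjsub (by simp)
    rw [Finset.sum_singleton] at hineq
    have hcard : (SuppZ h \ {j}).card = (SuppZ h).card - 1 := by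
      rw [Finset.card_sdiff_of_subset hjsub, Finset.card_singleton]
    have hpos : 1 ≤ (SuppZ h).card := Finset.card_pos.2 ⟨j, hj⟩
    have hsum : ∑ l ∈ SuppZ h \ {j}, ((1:ℝ) - p l)
        = ((SuppZ h).card : ℝ) - 1 - ∑ l ∈ SuppZ h \ {j}, p l := by
      rw [Finset.sum_sub_distrib, Finset.sum_const, nsmul_eq_mul, mul_one, hcard]
      push_cast [hpos]
      ring
    rw [hsum] at hineq
    linarith
end

section
/- Let H be a binary m×n parity check matrix. Then the relaxed fractional distance equals the fractional distance: min over inactive constraints k of (min Σ_i f_i subject to f ∈ K(H) ∩ F_k) equals d_frac(H) = min over nonzero vertices f of P(H) of Σ_i f_i. (Assume P(H) has at least one nonzero vertex.) -/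
open Finset

/-- Fundamental cone K(H): box constraints together with the active parity
constraints (those whose defining hyperplane passes through the origin). -/
def fundamentalCone {m n : ℕ} (H : Fin m → Fin n → ZMod 2) : Set (Fin n → ℝ) :=
  {f | (∀ i, f i ∈ Set.Icc (0:ℝ) 1) ∧
    ∀ i, ∀ S ⊆ SuppZ (H i), Odd S.card →
      (((SuppZ (H i) \ S).card : ℝ) = ((SuppZ (H i)).card : ℝ) - 1) →
      ∑ j ∈ S, f j + ∑ j ∈ SuppZ (H i) \ S, (1 - f j) ≤ ((SuppZ (H i)).card : ℝ) - 1}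

namespace Stmt9Aux

variable {m n : ℕ}

/-- The affine value of a parity constraint. -/
def valC (D S : Finset (Fin n)) (x : Fin n → ℝ) : ℝ :=
  ∑ j ∈ S, x j + ∑ j ∈ D \ S, (1 - x j)

lemma valC_continuous (D S : Finset (Fin n)) : Continuous (valC D S) := by
  unfold valC
  exact (continuous_finset_sum _ fun j _ => continuous_apply j).add
    (continuous_finset_sum _ fun j _ => continuous_const.sub (continuous_apply j))

lemma valC_affine (D S : Finset (Fin n)) (a b : ℝ) (hab : a + b = 1) (x y : Fin n → ℝ) :
    valC D S (fun j => a * x j + b * y j) = a * valC D S x + b * valC D S y := by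
  unfold valC
  have h1 : ∀ j, (1:ℝ) - (a * x j + b * y j) = a * (1 - x j) + b * (1 - y j) := by
    intro j; linear_combination (-1 : ℝ) * hab
  rw [Finset.sum_congr rfl fun j _ => h1 j]
  rw [Finset.sum_add_distrib, Finset.sum_add_distrib, ← Finset.mul_sum, ← Finset.mul_sum,
    ← Finset.mul_sum, ← Finset.mul_sum]
  ring

lemma valC_lin (D S : Finset (Fin n)) (x : Fin n → ℝ) :
    valC D S x = (∑ j ∈ S, x j - ∑ j ∈ D \ S, x j) + ((D \ S).card : ℝ) := by
  unfold valC
  rw [Finset.sum_sub_distrib]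
  simp [Finset.sum_const]
  ring

lemma valC_smul_le (D S : Finset (Fin n)) (c : ℝ) (hc : 0 ≤ c)
    (hact : ((D \ S).card : ℝ) = (D.card : ℝ) - 1)
    (x : Fin n → ℝ) (hx : valC D S x ≤ (D.card : ℝ) - 1) :
    valC D S (fun j => c * x j) ≤ (D.card : ℝ) - 1 := by
  rw [valC_lin] at hx
  rw [valC_lin]
  rw [← Finset.mul_sum, ← Finset.mul_sum]
  have hA : ∑ j ∈ S, x j - ∑ j ∈ D \ S, x j ≤ 0 := by rw [hact] at hx; linarith
  nlinarith [mul_nonpos_of_nonneg_of_nonpos hc hA]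

lemma valC_zero (D S : Finset (Fin n)) : valC D S 0 = ((D \ S).card : ℝ) := by
  simp [valC]


section
variable (H : Fin m → Fin n → ZMod 2)

def Wset : Set (Fin n → ℝ) :=
  {x | (∀ j, x j < 1) ∧ ∀ i : Fin m, ∀ S : Finset (Fin n), S ⊆ SuppZ (H i) → Odd S.card →
    (((SuppZ (H i) \ S).card : ℝ) ≠ ((SuppZ (H i)).card : ℝ) - 1) →
    valC (SuppZ (H i)) S x < ((SuppZ (H i)).card : ℝ) - 1}

lemma isOpen_Wset : IsOpen (Wset H) := by
  have h1 : IsOpen {x : Fin n → ℝ | ∀ j, x j < 1} := by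
    rw [Set.setOf_forall]
    exact isOpen_iInter_of_finite fun j => isOpen_lt (continuous_apply j) continuous_const
  have h2 : IsOpen {x : Fin n → ℝ | ∀ i : Fin m, ∀ S : Finset (Fin n), S ⊆ SuppZ (H i) →
      Odd S.card → (((SuppZ (H i) \ S).card : ℝ) ≠ ((SuppZ (H i)).card : ℝ) - 1) →
      valC (SuppZ (H i)) S x < ((SuppZ (H i)).card : ℝ) - 1} := by
    rw [Set.setOf_forall]
    refine isOpen_iInter_of_finite fun i => ?_
    rw [Set.setOf_forall]
    refine isOpen_iInter_of_finite fun S => ?_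
    by_cases h : S ⊆ SuppZ (H i) ∧ Odd S.card ∧
        (((SuppZ (H i) \ S).card : ℝ) ≠ ((SuppZ (H i)).card : ℝ) - 1)
    · have he : {x : Fin n → ℝ | S ⊆ SuppZ (H i) → Odd S.card →
          (((SuppZ (H i) \ S).card : ℝ) ≠ ((SuppZ (H i)).card : ℝ) - 1) →
          valC (SuppZ (H i)) S x < ((SuppZ (H i)).card : ℝ) - 1} =
          {x : Fin n → ℝ | valC (SuppZ (H i)) S x < ((SuppZ (H i)).card : ℝ) - 1} := by
        ext x; simp only [Set.mem_setOf_eq]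
        exact ⟨fun hx => hx h.1 h.2.1 h.2.2, fun hx _ _ _ => hx⟩
      rw [he]; exact isOpen_lt (valC_continuous _ _) continuous_const
    · have he : {x : Fin n → ℝ | S ⊆ SuppZ (H i) → Odd S.card →
          (((SuppZ (H i) \ S).card : ℝ) ≠ ((SuppZ (H i)).card : ℝ) - 1) →
          valC (SuppZ (H i)) S x < ((SuppZ (H i)).card : ℝ) - 1} = Set.univ := by
        ext x; simp only [Set.mem_setOf_eq, Set.mem_univ, iff_true]
        intro hs ho hne; exact absurd ⟨hs, ho, hne⟩ h
      rw [he]; exact isOpen_univ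
  exact (h1.inter h2 : _)

lemma mem_P_iff (x : Fin n → ℝ) : x ∈ fundamentalPolytope H ↔ ∀ i : Fin m,
    (∀ j, x j ∈ Set.Icc (0:ℝ) 1) ∧ ∀ S ⊆ SuppZ (H i), Odd S.card →
      valC (SuppZ (H i)) S x ≤ ((SuppZ (H i)).card : ℝ) - 1 := by
  simp only [fundamentalPolytope, Set.mem_iInter, parityPolytope, Set.mem_setOf_eq, valC]

lemma P_box (x : Fin n → ℝ) (hx : x ∈ fundamentalPolytope H) (i : Fin m) :
    ∀ j, x j ∈ Set.Icc (0:ℝ) 1 := ((mem_P_iff H x).mp hx i).1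

lemma P_val_le (x : Fin n → ℝ) (hx : x ∈ fundamentalPolytope H) (i : Fin m)
    (S : Finset (Fin n)) (hS : S ⊆ SuppZ (H i)) (hodd : Odd S.card) :
    valC (SuppZ (H i)) S x ≤ ((SuppZ (H i)).card : ℝ) - 1 :=
  ((mem_P_iff H x).mp hx i).2 S hS hodd

lemma mem_P (x : Fin n → ℝ) (hW : x ∈ Wset H) (h0 : ∀ j, 0 ≤ x j)
    (hact : ∀ i : Fin m, ∀ S : Finset (Fin n), S ⊆ SuppZ (H i) → Odd S.card →
      (((SuppZ (H i) \ S).card : ℝ) = ((SuppZ (H i)).card : ℝ) - 1) →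
      valC (SuppZ (H i)) S x ≤ ((SuppZ (H i)).card : ℝ) - 1) :
    x ∈ fundamentalPolytope H := by
  rw [mem_P_iff]
  intro i
  refine ⟨fun j => ⟨h0 j, (hW.1 j).le⟩, fun S hS hodd => ?_⟩
  by_cases hc : ((SuppZ (H i) \ S).card : ℝ) = ((SuppZ (H i)).card : ℝ) - 1
  · exact hact i S hS hodd hc
  · exact (hW.2 i S hS hodd hc).le

lemma zero_mem_W : (0 : Fin n → ℝ) ∈ Wset H := by
  constructor
  · intro j; norm_num
  · intro i S hS hodd hne
    rw [valC_zero]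
    have hc1 : (1 : ℝ) ≤ S.card := by
      have h0 : S.card ≠ 0 := by rcases hodd with ⟨k, hk⟩; omega
      exact_mod_cast Nat.one_le_iff_ne_zero.mpr h0
    have hsd : ((SuppZ (H i) \ S).card : ℝ) = ((SuppZ (H i)).card : ℝ) - S.card := by
      rw [Finset.card_sdiff_of_subset hS, Nat.cast_sub (Finset.card_le_card hS)]
    have hle : ((SuppZ (H i) \ S).card : ℝ) ≤ ((SuppZ (H i)).card : ℝ) - 1 := by
      rw [hsd]; linarith
    exact lt_of_le_of_ne hle hne

lemma zero_mem_P : (0 : Fin n → ℝ) ∈ fundamentalPolytope H := by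
  refine mem_P H 0 (zero_mem_W H) (fun j => le_refl 0) ?_
  intro i S hS hodd hc
  rw [valC_zero, hc]

lemma near_mem_W (g : Fin n → ℝ) (hg : g ∈ Wset H) (v : Fin n → ℝ) :
    ∃ δ : ℝ, 0 < δ ∧ δ < 1 ∧ ∀ c : ℝ, |c| ≤ δ → (fun j => g j + c * v j) ∈ Wset H := by
  obtain ⟨r, hr, hball⟩ := Metric.isOpen_iff.mp (isOpen_Wset H) g hg
  have hd : (0:ℝ) < r / (2 * (‖v‖ + 1)) := by positivity
  refine ⟨min (1/2) (r / (2 * (‖v‖ + 1))), lt_min (by norm_num) hd,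
    lt_of_le_of_lt (min_le_left _ _) (by norm_num), ?_⟩
  intro c hc
  apply hball
  rw [Metric.mem_ball]
  have heq : (fun j => g j + c * v j) = g + c • v := by
    funext j; simp [Pi.smul_apply, smul_eq_mul]
  rw [heq, dist_eq_norm, add_sub_cancel_left, norm_smul, Real.norm_eq_abs]
  have h1 : |c| * ‖v‖ ≤ (r / (2 * (‖v‖ + 1))) * ‖v‖ :=
    mul_le_mul_of_nonneg_right (le_trans hc (min_le_right _ _)) (norm_nonneg v)
  have h2 : (r / (2 * (‖v‖ + 1))) * ‖v‖ < r := by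
    rw [div_mul_eq_mul_div, div_lt_iff₀ (by positivity)]
    nlinarith [norm_nonneg v]
  linarith

lemma P_closed : IsClosed (fundamentalPolytope H) := by
  apply isClosed_iInter
  intro i
  have he : parityPolytope (H i) = {f : Fin n → ℝ | ∀ j, f j ∈ Set.Icc (0:ℝ) 1} ∩
      {f : Fin n → ℝ | ∀ S : Finset (Fin n), S ⊆ SuppZ (H i) → Odd S.card →
        valC (SuppZ (H i)) S f ≤ ((SuppZ (H i)).card : ℝ) - 1} := rfl
  rw [he]
  apply IsClosed.inter
  · rw [Set.setOf_forall]
    exact isClosed_iInter fun j => IsClosed.preimage (continuous_apply j) isClosed_Icc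
  · rw [Set.setOf_forall]
    refine isClosed_iInter fun S => ?_
    by_cases h : S ⊆ SuppZ (H i) ∧ Odd S.card
    · have he2 : {f : Fin n → ℝ | S ⊆ SuppZ (H i) → Odd S.card →
          valC (SuppZ (H i)) S f ≤ ((SuppZ (H i)).card : ℝ) - 1} =
          {f : Fin n → ℝ | valC (SuppZ (H i)) S f ≤ ((SuppZ (H i)).card : ℝ) - 1} := by
        ext f; simp only [Set.mem_setOf_eq]
        exact ⟨fun hx => hx h.1 h.2, fun hx _ _ => hx⟩
      rw [he2]; exact isClosed_le (valC_continuous _ _) continuous_const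
    · have he2 : {f : Fin n → ℝ | S ⊆ SuppZ (H i) → Odd S.card →
          valC (SuppZ (H i)) S f ≤ ((SuppZ (H i)).card : ℝ) - 1} = Set.univ := by
        ext f; simp only [Set.mem_setOf_eq, Set.mem_univ, iff_true]
        intro hs ho; exact absurd ⟨hs, ho⟩ h
      rw [he2]; exact isClosed_univ

lemma P_compact (hm : 0 < m) : IsCompact (fundamentalPolytope H) := by
  have hsub : fundamentalPolytope H ⊆ Set.pi Set.univ (fun _ : Fin n => Set.Icc (0:ℝ) 1) := by
    intro x hx
    rw [Set.mem_univ_pi]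
    exact fun j => P_box H x hx ⟨0, hm⟩ j
  exact IsCompact.of_isClosed_subset (isCompact_univ_pi fun _ => isCompact_Icc) (P_closed H) hsub

end
section
variable (H : Fin m → Fin n → ZMod 2)

lemma face_isExtreme (X : Set (Fin n → ℝ)) (l : (Fin n → ℝ) → ℝ)
    (hl : ∀ (a b : ℝ) (x y : Fin n → ℝ), 0 < a → 0 < b → a + b = 1 →
      l (a • x + b • y) = a * l x + b * l y)
    (β : ℝ) (hb : ∀ x ∈ X, l x ≤ β) :
    IsExtreme ℝ X {x ∈ X | l x = β} := by
  constructor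
  · exact fun x hx => hx.1
  · rintro y hy z hz x ⟨hxX, hxl⟩ hseg
    obtain ⟨a, b, ha, hbb, hab, hsum⟩ := hseg
    have hsum' : a * l y + b * l z = β := by rw [← hl a b y z ha hbb hab, hsum, hxl]
    have h1 := hb y hy
    have h2 := hb z hz
    have hp1 : 0 ≤ a * (β - l y) := mul_nonneg ha.le (sub_nonneg.mpr h1)
    have hp2 : 0 ≤ b * (β - l z) := mul_nonneg hbb.le (sub_nonneg.mpr h2)
    have hkey : a * (β - l y) + b * (β - l z) = 0 := by linear_combination β * hab - hsum'
    have hz1 : a * (β - l y) = 0 := by linarith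
    have hz2 : b * (β - l z) = 0 := by linarith
    have hly : l y = β := by
      rcases mul_eq_zero.mp hz1 with h | h
      · exact absurd h (ne_of_gt ha)
      · linarith
    have hlz : l z = β := by
      rcases mul_eq_zero.mp hz2 with h | h
      · exact absurd h (ne_of_gt hbb)
      · linarith
    exact ⟨hy, hly⟩

lemma vertex_of_extreme (X : Set (Fin n → ℝ)) (x : Fin n → ℝ)
    (hx : x ∈ Set.extremePoints ℝ X) : IsVertex X x := by
  obtain ⟨hxX, hext⟩ := hx
  refine ⟨hxX, ?_⟩
  intro g h hg hh t ht0 ht1 heq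
  have hseg : x ∈ openSegment ℝ g h := by
    refine ⟨t, 1 - t, ht0, by linarith, by ring, ?_⟩
    rw [heq]; funext j; simp [smul_eq_mul]
  have h1 := hext hg hh hseg
  have h2 := hext hh hg (by rw [openSegment_symm]; exact hseg)
  rw [h1, h2]

lemma exists_min_vertex (hm : 0 < m) (F : Set (Fin n → ℝ))
    (hFP : F ⊆ fundamentalPolytope H) (hF_closed : IsClosed F) (hFne : F.Nonempty)
    (hFext : IsExtreme ℝ (fundamentalPolytope H) F) (h0F : (0 : Fin n → ℝ) ∉ F) :
    ∃ x, IsVertex (fundamentalPolytope H) x ∧ x ≠ 0 ∧ ∀ y ∈ F, ∑ j, x j ≤ ∑ j, y j := by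
  have hPc : IsCompact (fundamentalPolytope H) := P_compact H hm
  have hFc : IsCompact F := hPc.of_isClosed_subset hF_closed hFP
  have hcont : Continuous (fun x : Fin n → ℝ => ∑ j, x j) :=
    continuous_finset_sum _ fun j _ => continuous_apply j
  obtain ⟨x₁, hx₁F, hx₁min⟩ := hFc.exists_isMinOn hFne hcont.continuousOn
  set c := ∑ j, x₁ j with hc
  have hGext : IsExtreme ℝ F {x ∈ F | (fun x : Fin n → ℝ => -∑ j, x j) x = -c} := by
    apply face_isExtreme
    · intro a b x y ha hb hab
      simp only [Pi.add_apply, Pi.smul_apply, smul_eq_mul]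
      rw [Finset.sum_add_distrib, ← Finset.mul_sum, ← Finset.mul_sum]
      ring
    · intro x hx
      have := hx₁min hx
      simp only [neg_le_neg_iff]
      exact this
  set G := {x ∈ F | (fun x : Fin n → ℝ => -∑ j, x j) x = -c} with hG
  have hGne : G.Nonempty := ⟨x₁, hx₁F, by simp [hc]⟩
  have hGclosed : IsClosed G := by
    have he : G = F ∩ {x : Fin n → ℝ | -∑ j, x j = -c} := rfl
    rw [he]
    exact hF_closed.inter (isClosed_eq hcont.neg continuous_const)
  have hGsub : G ⊆ fundamentalPolytope H := fun x hx => hFP hx.1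
  have hGc : IsCompact G := hPc.of_isClosed_subset hGclosed hGsub
  obtain ⟨x₀, hx₀⟩ := hGc.extremePoints_nonempty hGne
  have hx₀P : x₀ ∈ Set.extremePoints ℝ (fundamentalPolytope H) :=
    (hFext.trans hGext).extremePoints_subset_extremePoints hx₀
  have hx₀G : x₀ ∈ G := hx₀.1
  refine ⟨x₀, vertex_of_extreme _ _ hx₀P, fun h0 => h0F (h0 ▸ hx₀G.1), ?_⟩
  intro y hy
  have hsum : ∑ j, x₀ j = c := by
    have := hx₀G.2
    simp only [neg_inj] at this
    exact this
  rw [hsum]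
  exact hx₁min hy

lemma vertex_cond (hm : 0 < m) (f : Fin n → ℝ)
    (hv : IsVertex (fundamentalPolytope H) f) (hf0 : f ≠ 0) :
    (∃ i, ∃ S ⊆ SuppZ (H i), Odd S.card ∧
        (((SuppZ (H i) \ S).card : ℝ) ≠ ((SuppZ (H i)).card : ℝ) - 1) ∧
        ∑ j ∈ S, f j + ∑ j ∈ SuppZ (H i) \ S, (1 - f j) = ((SuppZ (H i)).card : ℝ) - 1) ∨
      (∃ j, f j = 1) := by
  by_contra hcon
  push_neg at hcon
  obtain ⟨h1, h2⟩ := hcon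
  obtain ⟨hfP, hfv⟩ := hv
  have hbox := P_box H f hfP ⟨0, hm⟩
  have hW : f ∈ Wset H := by
    constructor
    · intro j; exact lt_of_le_of_ne (hbox j).2 (h2 j)
    · intro i S hS hodd hne
      exact lt_of_le_of_ne (P_val_le H f hfP i S hS hodd) (h1 i S hS hodd hne)
  obtain ⟨δ, hδ0, hδ1, hδ⟩ := near_mem_W H f hW f
  have hmem : ∀ c : ℝ, |c - 1| ≤ δ → (fun j => c * f j) ∈ fundamentalPolytope H := by
    intro c hc
    have hc0 : 0 ≤ c := by
      have := abs_le.mp hc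
      linarith [this.1]
    apply mem_P
    · have hw := hδ (c - 1) hc
      have he : (fun j => c * f j) = (fun j => f j + (c - 1) * f j) := by funext j; ring
      rw [he]; exact hw
    · intro j; exact mul_nonneg hc0 (hbox j).1
    · intro i S hS hodd hact
      exact valC_smul_le _ _ c hc0 hact f (P_val_le H f hfP i S hS hodd)
  have hg := hmem (1 + δ) (by rw [show (1:ℝ) + δ - 1 = δ by ring, abs_of_pos hδ0])
  have hh := hmem (1 - δ) (by rw [show (1:ℝ) - δ - 1 = -δ by ring, abs_neg, abs_of_pos hδ0])
  have hgh := hfv _ _ hg hh (1/2) one_half_pos (by norm_num) (by funext j; ring)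
  apply hf0
  funext j
  have hj := congrFun hgh j
  have h3 : δ * f j = 0 := by linear_combination hj / 2
  rcases mul_eq_zero.mp h3 with h | h
  · exact absurd h (ne_of_gt hδ0)
  · exact h

end

end Stmt9Aux


open Stmt9Aux in
theorem stmt9 {m n : ℕ} (H : Fin m → Fin n → ZMod 2)
    (hex : ∃ f, IsVertex (fundamentalPolytope H) f ∧ f ≠ 0) :
    sInf {w : ℝ | ∃ f, f ∈ fundamentalCone H ∧ w = ∑ j, f j ∧
        ((∃ i, ∃ S ⊆ SuppZ (H i), Odd S.card ∧
            (((SuppZ (H i) \ S).card : ℝ) ≠ ((SuppZ (H i)).card : ℝ) - 1) ∧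
            ∑ j ∈ S, f j + ∑ j ∈ SuppZ (H i) \ S, (1 - f j) = ((SuppZ (H i)).card : ℝ) - 1) ∨
          (∃ j, f j = 1))} =
    sInf {w : ℝ | ∃ f, IsVertex (fundamentalPolytope H) f ∧ f ≠ 0 ∧ w = ∑ i, f i} := by
  rcases Nat.eq_zero_or_pos m with hm | hm
  · exfalso
    subst hm
    obtain ⟨f, ⟨hfP, hfv⟩, hf0⟩ := hex
    have hmem : ∀ g : Fin n → ℝ, g ∈ fundamentalPolytope H := by
      intro g
      rw [fundamentalPolytope, Set.mem_iInter]
      exact fun i => i.elim0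
    have h2f := hfv (fun i => 2 * f i) 0 (hmem _) (hmem _) (1/2) (by norm_num) (by norm_num)
      (by funext j; rw [Pi.zero_apply]; ring)
    apply hf0
    funext j
    have hj := congrFun h2f j
    simp only [Pi.zero_apply] at hj ⊢
    linarith
  · -- main case
    have hconeOf : ∀ f, f ∈ fundamentalPolytope H → f ∈ fundamentalCone H := by
      intro f hf
      exact ⟨P_box H f hf ⟨0, hm⟩, fun i S hS hodd _ => P_val_le H f hf i S hS hodd⟩
    have hRbdd : BddBelow {w : ℝ | ∃ f, IsVertex (fundamentalPolytope H) f ∧ f ≠ 0 ∧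
        w = ∑ i, f i} := by
      refine ⟨0, ?_⟩
      rintro w ⟨f', hv', -, rfl⟩
      exact Finset.sum_nonneg fun j _ => ((P_box H f' hv'.1 ⟨0, hm⟩) j).1
    apply le_antisymm
    · -- sInf LHS ≤ sInf RHS
      refine csInf_le_csInf ?_ ?_ ?_
      · refine ⟨0, ?_⟩
        rintro w ⟨f', hfK, rfl, -⟩
        exact Finset.sum_nonneg fun j _ => (hfK.1 j).1
      · obtain ⟨f₀, hv₀, h0₀⟩ := hex
        exact ⟨∑ i, f₀ i, f₀, hv₀, h0₀, rfl⟩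
      · rintro w ⟨f, hv, hf0, rfl⟩
        exact ⟨f, hconeOf f hv.1, rfl, vertex_cond H hm f hv hf0⟩
    · -- sInf RHS ≤ sInf LHS
      refine le_csInf ?_ ?_
      · obtain ⟨f₀, hv₀, h0₀⟩ := hex
        exact ⟨∑ i, f₀ i, f₀, hconeOf f₀ hv₀.1, rfl, vertex_cond H hm f₀ hv₀ h0₀⟩
      · intro w hw
        obtain ⟨f, hfK, rfl, hcond⟩ := hw
        have hφcont : Continuous (fun ε : ℝ => fun j => ε * f j) :=
          continuous_pi fun j => continuous_id.mul continuous_const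
        set A : Set ℝ :=
          Set.Icc (0:ℝ) 1 ∩ (fun ε : ℝ => fun j => ε * f j) ⁻¹' (fundamentalPolytope H) with hA
        have h0A : (0:ℝ) ∈ A := by
          refine ⟨⟨le_refl 0, by norm_num⟩, ?_⟩
          show (fun j => (0:ℝ) * f j) ∈ fundamentalPolytope H
          have he : (fun j => (0:ℝ) * f j) = (0 : Fin n → ℝ) := by funext j; simp
          rw [he]; exact zero_mem_P H
        have hAbdd : BddAbove A := ⟨1, fun ε hε => hε.1.2⟩
        have hAclosed : IsClosed A := isClosed_Icc.inter ((P_closed H).preimage hφcont)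
        set ε₀ := sSup A with hε₀
        have hε₀A : ε₀ ∈ A := hAclosed.csSup_mem ⟨0, h0A⟩ hAbdd
        have hε₀1 : ε₀ ≤ 1 := hε₀A.1.2
        have hε₀nn : 0 ≤ ε₀ := hε₀A.1.1
        obtain ⟨δ, hδ0, hδ1, hδW⟩ := near_mem_W H 0 (zero_mem_W H) f
        have hδA : δ ∈ A := by
          refine ⟨⟨hδ0.le, hδ1.le⟩, ?_⟩
          show (fun j => δ * f j) ∈ fundamentalPolytope H
          apply mem_P
          · have hw := hδW δ (by rw [abs_of_pos hδ0])
            have he : (fun j => δ * f j) = (fun j => (0 : Fin n → ℝ) j + δ * f j) := by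
              funext j; simp
            rw [he]; exact hw
          · intro j; exact mul_nonneg hδ0.le (hfK.1 j).1
          · intro i S hS hodd hact
            exact valC_smul_le _ _ δ hδ0.le hact f (hfK.2 i S hS hodd hact)
        have hε₀pos : 0 < ε₀ := lt_of_lt_of_le hδ0 (le_csSup hAbdd hδA)
        have hgP : (fun j => ε₀ * f j) ∈ fundamentalPolytope H := hε₀A.2
        set g : Fin n → ℝ := fun j => ε₀ * f j with hg
        have hgnn : ∀ j, 0 ≤ g j := fun j => mul_nonneg hε₀nn (hfK.1 j).1
        have hclaim : (∃ i, ∃ S ⊆ SuppZ (H i), Odd S.card ∧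
            (((SuppZ (H i) \ S).card : ℝ) ≠ ((SuppZ (H i)).card : ℝ) - 1) ∧
            valC (SuppZ (H i)) S g = ((SuppZ (H i)).card : ℝ) - 1) ∨ (∃ j, g j = 1) := by
          by_contra hng
          push_neg at hng
          obtain ⟨hng1, hng2⟩ := hng
          rcases eq_or_lt_of_le hε₀1 with heq | hlt
          · have hgf : g = f := by funext j; rw [hg]; simp [heq]
            rcases hcond with hcase | hcase
            · obtain ⟨i, S, hS, hodd, hne, htight⟩ := hcase
              exact (hng1 i S hS hodd hne) (by rw [hgf]; exact htight)
            · obtain ⟨j, hj⟩ := hcase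
              exact (hng2 j) (by rw [hgf]; exact hj)
          · have hgW : g ∈ Wset H := by
              constructor
              · intro j
                exact lt_of_le_of_ne ((P_box H g hgP ⟨0, hm⟩ j).2) (hng2 j)
              · intro i S hS hodd hne
                exact lt_of_le_of_ne (P_val_le H g hgP i S hS hodd) (hng1 i S hS hodd hne)
            obtain ⟨δ₂, hδ₂0, hδ₂1, hδ₂W⟩ := near_mem_W H g hgW g
            set η := min δ₂ (1 - ε₀) with hη
            have hη0 : 0 < η := lt_min hδ₂0 (by linarith)
            have hηδ : η ≤ δ₂ := min_le_left _ _
            have hmemP : (fun j => ((1 + η) * ε₀) * f j) ∈ fundamentalPolytope H := by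
              apply mem_P
              · have hw2 := hδ₂W η (by rw [abs_of_pos hη0]; exact hηδ)
                have he : (fun j => ((1 + η) * ε₀) * f j) = (fun j => g j + η * g j) := by
                  funext j; rw [hg]; ring
                rw [he]; exact hw2
              · intro j
                exact mul_nonneg (mul_nonneg (by linarith) hε₀nn) (hfK.1 j).1
              · intro i S hS hodd hact
                have hgle := P_val_le H g hgP i S hS hodd
                have hv2 := valC_smul_le _ _ (1 + η) (by linarith) hact g hgle
                have he : (fun j => (1 + η) * g j) = (fun j => ((1 + η) * ε₀) * f j) := by
                  funext j; rw [hg]; ring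
                rw [he] at hv2; exact hv2
            have hmemA : (1 + η) * ε₀ ∈ A := by
              refine ⟨⟨mul_nonneg (by linarith) hε₀nn, ?_⟩, hmemP⟩
              have hη1 : η ≤ 1 - ε₀ := min_le_right _ _
              nlinarith
            have hle := le_csSup hAbdd hmemA
            nlinarith
        have hsumg : ∑ j, g j = ε₀ * ∑ j, f j := by
          rw [hg, Finset.mul_sum]
        have hfsum_nn : (0:ℝ) ≤ ∑ j, f j := Finset.sum_nonneg fun j _ => (hfK.1 j).1
        rcases hclaim with ⟨i₀, S₀, hS₀, hodd₀, hne₀, htight₀⟩ | ⟨j₀, hj₀⟩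
        · set F := {x ∈ fundamentalPolytope H |
            valC (SuppZ (H i₀)) S₀ x = ((SuppZ (H i₀)).card : ℝ) - 1} with hF
          have hFext : IsExtreme ℝ (fundamentalPolytope H) F := by
            apply face_isExtreme
            · intro a b x y ha hb hab
              have he : a • x + b • y = fun j => a * x j + b * y j := by
                funext j; simp [smul_eq_mul]
              rw [he, valC_affine _ _ a b hab]
            · intro x hx; exact P_val_le H x hx i₀ S₀ hS₀ hodd₀
          have hFsub : F ⊆ fundamentalPolytope H := fun x hx => hx.1
          have hFclosed : IsClosed F := by
            have he : F = fundamentalPolytope H ∩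
                {x | valC (SuppZ (H i₀)) S₀ x = ((SuppZ (H i₀)).card : ℝ) - 1} := rfl
            rw [he]
            exact (P_closed H).inter (isClosed_eq (valC_continuous _ _) continuous_const)
          have hFne : F.Nonempty := ⟨g, hgP, htight₀⟩
          have h0F : (0 : Fin n → ℝ) ∉ F := by
            rintro ⟨-, h0⟩
            rw [valC_zero] at h0
            exact hne₀ h0
          obtain ⟨x₀, hx₀v, hx₀0, hx₀min⟩ :=
            exists_min_vertex H hm F hFsub hFclosed hFne hFext h0F
          calc sInf {w : ℝ | ∃ f, IsVertex (fundamentalPolytope H) f ∧ f ≠ 0 ∧ w = ∑ i, f i}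
              ≤ ∑ j, x₀ j := csInf_le hRbdd ⟨x₀, hx₀v, hx₀0, rfl⟩
            _ ≤ ∑ j, g j := hx₀min g ⟨hgP, htight₀⟩
            _ = ε₀ * ∑ j, f j := hsumg
            _ ≤ ∑ j, f j := by nlinarith
        · set F := {x ∈ fundamentalPolytope H | x j₀ = 1} with hF
          have hFext : IsExtreme ℝ (fundamentalPolytope H) F := by
            apply face_isExtreme (l := fun x => x j₀)
            · intro a b x y ha hb hab
              simp [smul_eq_mul]
            · intro x hx; exact ((P_box H x hx ⟨0, hm⟩) j₀).2
          have hFsub : F ⊆ fundamentalPolytope H := fun x hx => hx.1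
          have hFclosed : IsClosed F := by
            have he : F = fundamentalPolytope H ∩ {x : Fin n → ℝ | x j₀ = 1} := rfl
            rw [he]
            exact (P_closed H).inter (isClosed_eq (continuous_apply j₀) continuous_const)
          have hFne : F.Nonempty := ⟨g, hgP, hj₀⟩
          have h0F : (0 : Fin n → ℝ) ∉ F := by
            rintro ⟨-, h0⟩
            simp at h0
          obtain ⟨x₀, hx₀v, hx₀0, hx₀min⟩ :=
            exists_min_vertex H hm F hFsub hFclosed hFne hFext h0F
          calc sInf {w : ℝ | ∃ f, IsVertex (fundamentalPolytope H) f ∧ f ≠ 0 ∧ w = ∑ i, f i}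
              ≤ ∑ j, x₀ j := csInf_le hRbdd ⟨x₀, hx₀v, hx₀0, rfl⟩
            _ ≤ ∑ j, g j := hx₀min g ⟨hgP, hj₀⟩
            _ = ε₀ * ∑ j, f j := hsumg
            _ ≤ ∑ j, f j := by nlinarith
end

section
/- Let H be a binary m×n parity check matrix, p ∈ ℝ^n with nonnegative entries, and h* = Σ_i a*_i h_i a redundant row such that U(h*) is a cutting polytope of p (there exists j ∈ Supp(h*) with p_j > Σ_{l∈Supp(h*)\{j}} p_l). Define Q = {i ∈ {1,…,m} : ∃ j ∈ Supp(p), h_{ij} ≠ 0} and let h = Σ_{i∈Q} a*_i h_i. Then U(h) is also a cutting polytope of p, i.e., there exists j ∈ Supp(h) with p_j > Σ_{l∈Supp(h)\{j}} p_l. -/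
open Finset

theorem stmt10 {m n : ℕ} (H : Fin m → Fin n → ZMod 2) (a : Fin m → ZMod 2)
    (p : Fin n → ℝ) (hp : ∀ i, 0 ≤ p i)
    (hstar hrow : Fin n → ZMod 2)
    (Q : Finset (Fin m))
    (hQ : Q = Finset.univ.filter (fun i => ∃ j ∈ SuppR p, H i j ≠ 0))
    (hhstar : hstar = fun j => ∑ i, a i * H i j)
    (hhrow : hrow = fun j => ∑ i ∈ Q, a i * H i j)
    (hcut : ∃ j ∈ SuppZ hstar, p j > ∑ l ∈ SuppZ hstar \ {j}, p l) :
    ∃ j ∈ SuppZ hrow, p j > ∑ l ∈ SuppZ hrow \ {j}, p l := by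
  obtain ⟨j, hj, hgt⟩ := hcut
  -- agreement on support of p
  have key : ∀ l, p l ≠ 0 → hrow l = hstar l := by
    intro l hl
    subst hhstar hhrow
    simp only
    apply Finset.sum_subset (Finset.subset_univ Q)
    intro i _ hiQ
    have hHi : H i l = 0 := by
      by_contra h
      apply hiQ
      rw [hQ]
      simp only [Finset.mem_filter, Finset.mem_univ, true_and]
      exact ⟨l, by simp [SuppR, hl], h⟩
    simp [hHi]
  have hpj : 0 < p j := lt_of_le_of_lt (Finset.sum_nonneg fun l _ => hp l) hgt
  have hjrow : j ∈ SuppZ hrow := by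
    simp only [SuppZ, Finset.mem_filter, Finset.mem_univ, true_and] at hj ⊢
    rw [key j hpj.ne']
    exact hj
  refine ⟨j, hjrow, lt_of_le_of_lt ?_ hgt⟩
  have filt : (SuppZ hrow \ {j}).filter (fun l => p l ≠ 0)
      = (SuppZ hstar \ {j}).filter (fun l => p l ≠ 0) := by
    ext l
    simp only [Finset.mem_filter, Finset.mem_sdiff, SuppZ, Finset.mem_filter,
      Finset.mem_univ, true_and]
    constructor
    · rintro ⟨⟨h1, h2⟩, h3⟩
      exact ⟨⟨by rwa [key l h3] at h1, h2⟩, h3⟩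
    · rintro ⟨⟨h1, h2⟩, h3⟩
      exact ⟨⟨by rwa [key l h3], h2⟩, h3⟩
  calc ∑ l ∈ SuppZ hrow \ {j}, p l
      = ∑ l ∈ (SuppZ hrow \ {j}).filter (fun l => p l ≠ 0), p l := by
        rw [Finset.sum_filter_ne_zero]
    _ = ∑ l ∈ (SuppZ hstar \ {j}).filter (fun l => p l ≠ 0), p l := by rw [filt]
    _ ≤ ∑ l ∈ SuppZ hstar \ {j}, p l :=
        Finset.sum_le_sum_of_subset_of_nonneg (Finset.filter_subset _ _)
          (fun l _ _ => hp l)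
end

section
/- For a binary vector t ∈ F_2^n with |Supp(t)| ≥ 1, the single parity polytope U(t) equals the set of f ∈ [0,1]^n whose restriction to Supp(t) lies in the convex hull of the even-weight binary vectors on Supp(t) (coordinates outside Supp(t) are unconstrained within [0,1]). -/
open Finset

section Abstract

variable {ι : Type*} [Fintype ι] [DecidableEq ι]

/-- The abstract parity polytope on the index type `ι`. -/
def Qset (ι : Type*) [Fintype ι] [DecidableEq ι] : Set (ι → ℝ) :=
  {x | (∀ i, x i ∈ Set.Icc (0:ℝ) 1) ∧
    ∀ S : Finset ι, Odd S.card →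
      ∑ j ∈ S, x j + ∑ j ∈ Sᶜ, (1 - x j) ≤ (Fintype.card ι : ℝ) - 1}

/-- The set of even-weight 0/1 vertices. -/
def Vset (ι : Type*) [Fintype ι] [DecidableEq ι] : Set (ι → ℝ) :=
  {g : ι → ℝ | ∃ S : Finset ι, Even S.card ∧ g = fun i => if i ∈ S then 1 else 0}

lemma Vset_subset_Qset : Vset ι ⊆ Qset ι := by
  rintro g ⟨T, hT, rfl⟩
  constructor
  · intro i
    by_cases h : i ∈ T <;> simp [h]
  · intro S hS
    have e1 : ∑ j ∈ S, (if j ∈ T then (1:ℝ) else 0)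
        = ((S.filter (fun j => j ∈ T)).card : ℝ) := by
      exact_mod_cast Finset.sum_boole (fun j => j ∈ T) S
    have e2 : ∑ j ∈ Sᶜ, (1 - if j ∈ T then (1:ℝ) else 0)
        = ((Sᶜ.filter (fun j => j ∉ T)).card : ℝ) := by
      rw [show (fun j => (1:ℝ) - if j ∈ T then 1 else 0)
          = fun j => if j ∉ T then (1:ℝ) else 0 by
        funext j; by_cases h : j ∈ T <;> simp [h]]
      exact_mod_cast Finset.sum_boole (fun j => j ∉ T) Sᶜ
    rw [e1, e2]
    set A := S.filter (fun j => j ∈ T) with hA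
    set B := Sᶜ.filter (fun j => j ∉ T) with hB
    have hdis : Disjoint A B :=
      Finset.disjoint_filter_filter (disjoint_compl_right)
    have hne : A ∪ B ≠ Finset.univ := by
      intro h
      have hST : S = T := by
        ext j
        constructor
        · intro hj
          have : j ∈ A ∪ B := h ▸ Finset.mem_univ j
          rcases Finset.mem_union.mp this with h' | h'
          · exact (Finset.mem_filter.mp h').2
          · exact absurd (Finset.mem_compl.mp (Finset.mem_filter.mp h').1) (fun hc => hc hj)
        · intro hj
          by_contra hjS
          have : j ∈ A ∪ B := h ▸ Finset.mem_univ j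
          rcases Finset.mem_union.mp this with h' | h'
          · exact hjS (Finset.mem_filter.mp h').1
          · exact (Finset.mem_filter.mp h').2 hj
      rw [hST] at hS
      exact (Nat.not_even_iff_odd.mpr hS) hT
    have hcard : A.card + B.card + 1 ≤ Fintype.card ι := by
      have h1 : (A ∪ B).card < Fintype.card ι := by
        rcases lt_or_eq_of_le (Finset.card_le_univ (A ∪ B)) with h | h
        · simpa [Finset.card_univ] using h
        · exact absurd (Finset.eq_univ_of_card _ (by simpa [Finset.card_univ] using h)) hne
      have h2 : (A ∪ B).card = A.card + B.card := Finset.card_union_of_disjoint hdis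
      omega
    have : ((A.card + B.card + 1 : ℕ) : ℝ) ≤ (Fintype.card ι : ℝ) := by exact_mod_cast hcard
    push_cast at this
    linarith

lemma Qset_convex : Convex ℝ (Qset ι) := by
  intro x hx y hy a b ha hb hab
  constructor
  · intro i
    have := (convex_Icc (0:ℝ) 1) (hx.1 i) (hy.1 i) ha hb hab
    simpa using this
  · intro S hS
    have h1 := hx.2 S hS
    have h2 := hy.2 S hS
    have e1 : ∑ j ∈ S, (a • x + b • y) j = a * ∑ j ∈ S, x j + b * ∑ j ∈ S, y j := by
      simp only [Pi.add_apply, Pi.smul_apply, smul_eq_mul]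
      rw [Finset.sum_add_distrib, Finset.mul_sum, Finset.mul_sum]
    have e2 : ∑ j ∈ Sᶜ, (1 - (a • x + b • y) j)
        = a * ∑ j ∈ Sᶜ, (1 - x j) + b * ∑ j ∈ Sᶜ, (1 - y j) := by
      rw [Finset.mul_sum, Finset.mul_sum, ← Finset.sum_add_distrib]
      refine Finset.sum_congr rfl (fun j _ => ?_)
      simp only [Pi.add_apply, Pi.smul_apply, smul_eq_mul]
      linear_combination -hab
    rw [e1, e2]
    nlinarith [mul_le_mul_of_nonneg_left h1 ha, mul_le_mul_of_nonneg_left h2 hb]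

lemma Qset_subset_hull : Qset ι ⊆ convexHull ℝ (Vset ι) := by
  intro x hx
  by_contra hxV
  have hVfin : (Vset ι).Finite := by
    apply Set.Finite.subset
      (Set.finite_range (fun S : Finset ι => (fun i => if i ∈ S then (1:ℝ) else 0)))
    rintro g ⟨S, _, rfl⟩
    exact ⟨S, rfl⟩
  have hclosed : IsClosed (convexHull ℝ (Vset ι)) := hVfin.isClosed_convexHull (𝕜 := ℝ)
  obtain ⟨f, u, hfu, hux⟩ :=
    geometric_hahn_banach_closed_point (convex_convexHull ℝ (Vset ι)) hclosed hxV
  set c : ι → ℝ := fun l => f (fun j => if l = j then 1 else 0) with hc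
  have hfx : ∀ y : ι → ℝ, f y = ∑ l, y l * c l := by
    intro y
    conv_lhs => rw [pi_eq_sum_univ y]
    rw [map_sum]
    refine Finset.sum_congr rfl (fun l _ => ?_)
    rw [map_smul, smul_eq_mul]
  set T : Finset ι := Finset.univ.filter (fun l => 0 < c l) with hT
  have hfv : ∀ W : Finset ι, f (fun i => if i ∈ W then 1 else 0) = ∑ l ∈ W, c l := by
    intro W
    rw [hfx]
    rw [show (fun l => (if l ∈ W then (1:ℝ) else 0) * c l)
        = fun l => if l ∈ W then c l else 0 by
      funext l; by_cases h : l ∈ W <;> simp [h]]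
    rw [Finset.sum_ite_mem, Finset.univ_inter]
  rcases Nat.even_or_odd T.card with hTeven | hTodd
  · -- even case
    have hvV : (fun i => if i ∈ T then (1:ℝ) else 0) ∈ convexHull ℝ (Vset ι) :=
      subset_convexHull ℝ _ ⟨T, hTeven, rfl⟩
    have hfxle : f x ≤ ∑ l ∈ T, c l := by
      rw [hfx x, ← Finset.sum_add_sum_compl T (fun l => x l * c l)]
      have b1 : ∑ l ∈ T, x l * c l ≤ ∑ l ∈ T, c l := by
        refine Finset.sum_le_sum (fun l hl => ?_)
        have hcl : 0 < c l := (Finset.mem_filter.mp hl).2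
        nlinarith [(hx.1 l).2]
      have b2 : ∑ l ∈ Tᶜ, x l * c l ≤ 0 := by
        refine Finset.sum_nonpos (fun l hl => ?_)
        have hcl : c l ≤ 0 := by
          have := (Finset.mem_compl.mp hl)
          simp only [hT, Finset.mem_filter, Finset.mem_univ, true_and] at this
          linarith [not_lt.mp this]
        exact mul_nonpos_of_nonneg_of_nonpos (hx.1 l).1 hcl
      linarith
    have := hfu _ hvV
    rw [hfv T] at this
    linarith
  · -- odd case
    have hTne : T.Nonempty := Finset.card_pos.mp hTodd.pos
    have hoptsne : (T.image c ∪ Tᶜ.image (fun l => -c l)).Nonempty :=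
      Finset.Nonempty.mono Finset.subset_union_left (hTne.image c)
    set δ : ℝ := (T.image c ∪ Tᶜ.image (fun l => -c l)).min' hoptsne with hδ
    have hδ0 : 0 ≤ δ := by
      apply Finset.le_min'
      intro y hy
      rcases Finset.mem_union.mp hy with h | h
      · obtain ⟨l, hl, rfl⟩ := Finset.mem_image.mp h
        exact le_of_lt (Finset.mem_filter.mp hl).2
      · obtain ⟨l, hl, rfl⟩ := Finset.mem_image.mp h
        have := Finset.mem_compl.mp hl
        simp only [hT, Finset.mem_filter, Finset.mem_univ, true_and] at this
        linarith [not_lt.mp this]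
    have hδT : ∀ l ∈ T, δ ≤ c l := fun l hl =>
      Finset.min'_le _ _ (Finset.mem_union_left _ (Finset.mem_image_of_mem c hl))
    have hδTc : ∀ l ∈ Tᶜ, δ ≤ -c l := fun l hl =>
      Finset.min'_le _ _ (Finset.mem_union_right _ (Finset.mem_image_of_mem _ hl))
    -- a vertex attaining ∑_{T} c - δ
    have hvert : ∃ W : Finset ι, Even W.card ∧ ∑ l ∈ W, c l = ∑ l ∈ T, c l - δ := by
      have hmem := Finset.min'_mem _ hoptsne
      rw [← hδ] at hmem
      rcases Finset.mem_union.mp hmem with h | h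
      · obtain ⟨l, hl, hcl⟩ := Finset.mem_image.mp h
        refine ⟨T.erase l, ?_, ?_⟩
        · rw [Finset.card_erase_of_mem hl]
          have := hTodd
          rcases this with ⟨k, hk⟩
          simp [hk]
        · rw [Finset.sum_erase_eq_sub hl, hcl]
      · obtain ⟨l, hl, hcl⟩ := Finset.mem_image.mp h
        have hlT : l ∉ T := Finset.mem_compl.mp hl
        refine ⟨insert l T, ?_, ?_⟩
        · rw [Finset.card_insert_of_notMem hlT]
          exact hTodd.add_one
        · rw [Finset.sum_insert hlT]
          have : c l = -δ := by linarith [hcl]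
          rw [this]; ring
    obtain ⟨W, hWeven, hWsum⟩ := hvert
    have hvV : (fun i => if i ∈ W then (1:ℝ) else 0) ∈ convexHull ℝ (Vset ι) :=
      subset_convexHull ℝ _ ⟨W, hWeven, rfl⟩
    -- the constraint for T gives the ℓ¹ bound
    have hW1 : (1:ℝ) ≤ ∑ j ∈ T, (1 - x j) + ∑ j ∈ Tᶜ, x j := by
      have hcon := hx.2 T hTodd
      have e1 : ∑ j ∈ T, (1 - x j) = (T.card : ℝ) - ∑ j ∈ T, x j := by
        rw [Finset.sum_sub_distrib, Finset.sum_const, nsmul_eq_mul, mul_one]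
      have e2 : ∑ j ∈ Tᶜ, (1 - x j) = ((Tᶜ).card : ℝ) - ∑ j ∈ Tᶜ, x j := by
        rw [Finset.sum_sub_distrib, Finset.sum_const, nsmul_eq_mul, mul_one]
      have e3 : (T.card : ℝ) + ((Tᶜ).card : ℝ) = (Fintype.card ι : ℝ) := by
        exact_mod_cast congrArg Nat.cast (Finset.card_add_card_compl T)
      rw [e2] at hcon
      linarith [e1]
    have hfxle : f x ≤ ∑ l ∈ T, c l - δ := by
      rw [hfx x, ← Finset.sum_add_sum_compl T (fun l => x l * c l)]
      have b1 : δ * ∑ j ∈ T, (1 - x j) ≤ ∑ l ∈ T, (c l - x l * c l) := by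
        rw [Finset.mul_sum]
        refine Finset.sum_le_sum (fun l hl => ?_)
        have h1 : δ ≤ c l := hδT l hl
        have h2 : x l ≤ 1 := (hx.1 l).2
        nlinarith
      have b2 : δ * ∑ j ∈ Tᶜ, x j ≤ ∑ l ∈ Tᶜ, (-(x l * c l)) := by
        rw [Finset.mul_sum]
        refine Finset.sum_le_sum (fun l hl => ?_)
        have h1 : δ ≤ -c l := hδTc l hl
        have h2 : 0 ≤ x l := (hx.1 l).1
        nlinarith
      have e1 : ∑ l ∈ T, (c l - x l * c l) = ∑ l ∈ T, c l - ∑ l ∈ T, x l * c l :=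
        Finset.sum_sub_distrib _ _
      have e2 : ∑ l ∈ Tᶜ, (-(x l * c l)) = -∑ l ∈ Tᶜ, x l * c l := Finset.sum_neg_distrib _
      nlinarith [mul_le_mul_of_nonneg_left hW1 hδ0]
    have := hfu _ hvV
    rw [hfv W, hWsum] at this
    linarith

/-- The main abstract identity. -/
lemma Qset_eq_hull : Qset ι = convexHull ℝ (Vset ι) :=
  Set.Subset.antisymm Qset_subset_hull (convexHull_min Vset_subset_Qset Qset_convex)

end Abstract

section Transfer

variable {n : ℕ} (t : Fin n → ZMod 2)

private abbrev emb (t : Fin n → ZMod 2) : {i // i ∈ SuppZ t} ↪ Fin n :=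
  Function.Embedding.subtype (· ∈ SuppZ t)

lemma univ_map_emb : (Finset.univ : Finset {i // i ∈ SuppZ t}).map (emb t) = SuppZ t := by
  ext i
  simp [Finset.mem_map, Function.Embedding.subtype, Subtype.exists]
  exact ⟨fun ⟨a, b, h⟩ => by subst h; exact b, fun h => ⟨i, h, rfl⟩⟩

lemma map_emb_subset (S : Finset {i // i ∈ SuppZ t}) : S.map (emb t) ⊆ SuppZ t := by
  intro i hi
  obtain ⟨a, _, rfl⟩ := Finset.mem_map.mp hi
  exact a.2

lemma compl_map_emb (S : Finset {i // i ∈ SuppZ t}) :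
    (Sᶜ).map (emb t) = SuppZ t \ S.map (emb t) := by
  ext i
  simp only [Finset.mem_map, Finset.mem_compl, Finset.mem_sdiff,
    Function.Embedding.subtype, Function.Embedding.coeFn_mk, Subtype.exists]
  constructor
  · rintro ⟨a, ha, haS, rfl⟩
    refine ⟨ha, ?_⟩
    rintro ⟨b, hb, hbS, rfl⟩
    exact haS hbS
  · rintro ⟨hi, hni⟩
    exact ⟨i, hi, fun hS => hni ⟨i, hi, hS, rfl⟩, rfl⟩

end Transfer

theorem stmt13 {n : ℕ} (t : Fin n → ZMod 2) (hcard : 1 ≤ (SuppZ t).card) :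
    parityPolytope t = {f | (∀ i, f i ∈ Set.Icc (0:ℝ) 1) ∧
      (fun i : {i // i ∈ SuppZ t} => f i.1) ∈
        convexHull ℝ {g : {i // i ∈ SuppZ t} → ℝ |
          ∃ S : Finset {i // i ∈ SuppZ t}, Even S.card ∧
            g = fun i => if i ∈ S then 1 else 0}} := by
  classical
  have hcardeq : (Fintype.card {i // i ∈ SuppZ t} : ℝ) = ((SuppZ t).card : ℝ) := by
    exact_mod_cast congrArg Nat.cast (Fintype.card_coe (SuppZ t))
  ext f
  simp only [parityPolytope, Set.mem_setOf_eq]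
  have hVeq : {g : {i // i ∈ SuppZ t} → ℝ |
      ∃ S : Finset {i // i ∈ SuppZ t}, Even S.card ∧
        g = fun i => if i ∈ S then 1 else 0} = Vset {i // i ∈ SuppZ t} := rfl
  rw [hVeq, ← Qset_eq_hull]
  constructor
  · rintro ⟨hbox, hcon⟩
    refine ⟨hbox, fun i => hbox i.1, fun S hS => ?_⟩
    have h := hcon (S.map (emb t)) (map_emb_subset t S)
      (by rwa [Finset.card_map])
    rw [← compl_map_emb t S, Finset.sum_map, Finset.sum_map, ← hcardeq] at h
    simpa using h
  · rintro ⟨hbox, _, hcon⟩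
    refine ⟨hbox, fun S hSsub hSodd => ?_⟩
    set S' : Finset {i // i ∈ SuppZ t} := S.subtype (· ∈ SuppZ t) with hS'
    have hmap : S'.map (emb t) = S := by
      rw [hS', Finset.subtype_map, Finset.filter_true_of_mem hSsub]
    have hcard' : Odd S'.card := by
      rw [show S'.card = S.card by rw [← hmap, Finset.card_map]]
      exact hSodd
    have h := hcon S' hcard'
    rw [← hmap, ← compl_map_emb t S', Finset.sum_map, Finset.sum_map, ← hcardeq]
    simpa using h
end

section
/- Let U be a matrix over F_2 in row echelon form obtained from H^Q (after a column permutation placing columns indexed by Supp(p)\{τ_1} first in decreasing order of p-value), and let u_i be its i-th row mapped back by the inverse permutation. If u_{i,τ_1} = 1 then |Supp(u_i) ∩ Supp(p)| ≤ |Supp(p)| − i + 1, where τ_1 is the index of the largest entry of p. -/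
open Finset

theorem stmt16 {n : ℕ} (hn : 0 < n) (p : Fin n → ℝ) (hp : ∀ i, 0 ≤ p i)
    (τ : Equiv.Perm (Fin n))
    (hsort : ∀ a b : Fin n, a ≤ b → p (τ b) ≤ p (τ a))
    (hsupp : ∀ j, j ∈ SuppR p ↔ ∃ k : Fin n, (k : ℕ) < (SuppR p).card ∧ τ k = j)
    (u : Fin n → ZMod 2) (i : ℕ) (hi : 1 ≤ i)
    (hech : ∀ k : Fin n, 1 ≤ (k : ℕ) → (k : ℕ) < i → u (τ k) = 0)
    (hlead : u (τ ⟨0, hn⟩) = 1) :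
    (SuppZ u ∩ SuppR p).card ≤ (SuppR p).card - i + 1 := by
  classical
  set c := (SuppR p).card with hc
  have hsub : SuppZ u ∩ SuppR p ⊆ insert (τ ⟨0, hn⟩)
      ((Finset.univ.filter (fun k : Fin n => i ≤ (k:ℕ) ∧ (k:ℕ) < c)).image τ) := by
    intro j hj
    rw [Finset.mem_inter] at hj
    obtain ⟨k, hk, hkj⟩ := (hsupp j).1 hj.2
    by_cases h0 : (k:ℕ) = 0
    · have hk0 : k = ⟨0, hn⟩ := Fin.ext h0
      rw [← hkj, hk0]; exact Finset.mem_insert_self _ _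
    · have h1 : 1 ≤ (k:ℕ) := Nat.one_le_iff_ne_zero.2 h0
      have hik : i ≤ (k:ℕ) := by
        by_contra h
        have hz := hech k h1 (lt_of_not_ge h)
        rw [hkj] at hz
        exact (Finset.mem_filter.1 hj.1).2 hz
      exact Finset.mem_insert_of_mem (Finset.mem_image.2 ⟨k, by simp [hik, hk], hkj⟩)
  have h1 := Finset.card_le_card hsub
  have h2 := Finset.card_insert_le (τ ⟨0, hn⟩)
      ((Finset.univ.filter (fun k : Fin n => i ≤ (k:ℕ) ∧ (k:ℕ) < c)).image τ)
  have h3 : ((Finset.univ.filter (fun k : Fin n => i ≤ (k:ℕ) ∧ (k:ℕ) < c)).image τ).card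
      ≤ c - i := by
    calc _ ≤ (Finset.univ.filter (fun k : Fin n => i ≤ (k:ℕ) ∧ (k:ℕ) < c)).card :=
          Finset.card_image_le
    _ ≤ (Finset.Ico i c).card := by
        apply Finset.card_le_card_of_injOn (fun k : Fin n => (k:ℕ))
        · intro k hk; rw [Finset.mem_coe, Finset.mem_filter] at hk; exact Finset.mem_Ico.2 hk.2
        · intro a _ b _ h; exact Fin.ext h
    _ = c - i := Nat.card_Ico i c
  omega
end
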